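/- (Equivariance step in Theorem 3.5(i)) Let F = (F^k)_{k≥0} be a symbol system of rank r ≥ 2 on W, let V = ℂ × W × ∏_{k=2}^{r} (F^k)^*, and for v ∈ W let g_v : V → V be defined by g_v(t, w, (f^l)_{l=2}^r) = (t, w + t·v, (f'^k)_{k=2}^r) with f'^k(φ) = Σ_{l=2}^{k} binom(k,l) · f^l(ι_v^{k-l} φ) + k · (ι_v^{k-1} φ)(w) + t · (ι_v^{k} φ) for φ ∈ F^k. Define φ_F : ℂ × W → V by φ_F(t, w) = (t^r, t^{r-1} w, (e_k(t,w))_{k=2}^r), where e_k(t,w) ∈ (F^k)^* is the functional φ ↦ t^{r-k} · φ(w, …, w). Then for all t ∈ ℂ and all w, v ∈ W one has g_v(φ_F(t, w)) = φ_F(t, w + t·v). -/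
import Mathlib


open scoped BigOperators

noncomputable section

/-- `Sym^k W^*`: the space of `k`-multilinear forms on `W`. -/
abbrev SymForm (W : Type*) [AddCommGroup W] [Module ℂ W] (k : ℕ) : Type _ :=
  MultilinearMap ℂ (fun _ : Fin k => W) ℂ

variable {W : Type*} [AddCommGroup W] [Module ℂ W]

/-- A multilinear form is symmetric. -/
def IsSymForm {k : ℕ} (φ : SymForm W k) : Prop :=
  ∀ (σ : Equiv.Perm (Fin k)) (v : Fin k → W), φ (v ∘ σ) = φ v

/-- Contraction `ι_w` of a `(k+1)`-form with a vector `w`. -/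
def contr {k : ℕ} (w : W) (φ : SymForm W (k + 1)) : SymForm W k :=
  φ.curryLeft w

/-- Iterated contraction `ι_w^j : Sym^{m+j} W^* → Sym^m W^*`. -/
def contrPow (w : W) : (j : ℕ) → {m : ℕ} → SymForm W (m + j) → SymForm W m
  | 0, _, φ => φ
  | j + 1, _, φ => contrPow w j (contr w φ)

/-- Cast along an equality of arities. -/
def symCast {k l : ℕ} (h : k = l) (φ : SymForm W k) : SymForm W l := h ▸ φ

/-- A symbol system of rank `r` on `W` (Definition 3.2): a family of subspaces
`F^k ⊆ Sym^k W^*` of symmetric forms with `F^0 = ℂ`, `F^1 = W^*`, `F^r ≠ 0`, `F^k = 0` for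
`k > r`, closed under all contractions `ι_w`. -/
structure SymbolSystem (W : Type*) [AddCommGroup W] [Module ℂ W] (r : ℕ) where
  F : (k : ℕ) → Submodule ℂ (SymForm W k)
  isSymForm_mem : ∀ (k : ℕ), ∀ φ ∈ F k, IsSymForm φ
  F_zero : F 0 = ⊤
  F_one : F 1 = ⊤
  F_rank_ne_bot : F r ≠ ⊥
  F_eq_bot_of_gt : ∀ k : ℕ, r < k → F k = ⊥
  contr_mem : ∀ (k : ℕ) (w : W), ∀ φ ∈ F (k + 1), contr w φ ∈ F k

namespace SymbolSystem

variable {r : ℕ} (S : SymbolSystem W r)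

lemma symCast_mem {k l : ℕ} (h : k = l) {φ : SymForm W k} (hφ : φ ∈ S.F k) :
    symCast h φ ∈ S.F l := by subst h; exact hφ

end SymbolSystem

lemma SymbolSystem.contrPow_mem {r : ℕ} (S : SymbolSystem W r) (w : W) :
    ∀ (j : ℕ) {m : ℕ} (φ : SymForm W (m + j)), φ ∈ S.F (m + j) → contrPow w j φ ∈ S.F m
  | 0, _, _, h => h
  | j + 1, m, φ, h => S.contrPow_mem w j (contr w φ) (S.contr_mem (m + j) w φ h)

lemma contr_add {k : ℕ} (w : W) (φ ψ : SymForm W (k + 1)) :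
    contr w (φ + ψ) = contr w φ + contr w ψ := rfl

lemma contr_smul {k : ℕ} (w : W) (c : ℂ) (φ : SymForm W (k + 1)) :
    contr w (c • φ) = c • contr w φ := rfl

lemma contrPow_add (w : W) :
    ∀ (j : ℕ) {m : ℕ} (φ ψ : SymForm W (m + j)),
      contrPow w j (φ + ψ) = contrPow w j φ + contrPow w j ψ
  | 0, _, _, _ => rfl
  | j + 1, m, φ, ψ => by
      show contrPow w j (contr w (φ + ψ)) = _
      rw [contr_add, contrPow_add w j]
      rfl

lemma contrPow_smul (w : W) :
    ∀ (j : ℕ) {m : ℕ} (c : ℂ) (φ : SymForm W (m + j)),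
      contrPow w j (c • φ) = c • contrPow w j φ
  | 0, _, _, _ => rfl
  | j + 1, m, c, φ => by
      show contrPow w j (contr w (c • φ)) = _
      rw [contr_smul, contrPow_smul w j]
      rfl

/-- `ι_w^j` bundled as a linear map. -/
def contrPowL (w : W) (j : ℕ) {m : ℕ} : SymForm W (m + j) →ₗ[ℂ] SymForm W m where
  toFun := contrPow w j
  map_add' φ ψ := contrPow_add w j φ ψ
  map_smul' c φ := contrPow_smul w j c φ

/-- Arity cast bundled as a linear map. -/
def symCastL {k l : ℕ} (h : k = l) : SymForm W k →ₗ[ℂ] SymForm W l where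
  toFun := symCast h
  map_add' φ ψ := by subst h; rfl
  map_smul' c φ := by subst h; rfl

/-- Evaluation of a `k`-form on the diagonal `(x, …, x)`, as a linear functional. -/
def evalDiagL {k : ℕ} (x : W) : SymForm W k →ₗ[ℂ] ℂ where
  toFun φ := φ (fun _ => x)
  map_add' φ ψ := by simp
  map_smul' c φ := by simp

/-- Evaluation of a `0`-form (a constant), as a linear functional. -/
def eval0L : SymForm W 0 →ₗ[ℂ] ℂ where
  toFun φ := φ Fin.elim0
  map_add' φ ψ := by simp
  map_smul' c φ := by simp
variable {r : ℕ}

/-- The vector space `V = ℂ × W × ∏_{k=2}^{r} (F^k)^*`. -/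
abbrev ModelSpace (S : SymbolSystem W r) : Type _ :=
  ℂ × W × ((k : Fin (r - 1)) → Module.Dual ℂ (S.F (k.val + 2)))

/-- The linear map `F^K → F^L`, `φ ↦ ι_v^{K-L} φ` (for `L ≤ K`). -/
def ctrRestrict (S : SymbolSystem W r) (v : W) (K L : ℕ) (h : L ≤ K) :
    (S.F K) →ₗ[ℂ] (S.F L) :=
  LinearMap.codRestrict (S.F L)
    ((contrPowL v (K - L)).comp ((symCastL (show K = L + (K - L) by omega)).comp
      (S.F K).subtype))
    (fun φ => S.contrPow_mem v (K - L) _ (S.symCast_mem _ φ.2))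

/-- The map `g_v : V → V` from the proof of Theorem 3.5(i):
`g_v (t, w, (f^l)_l) = (t, w + t v, (f'^k)_k)` where
`f'^k(φ) = ∑_{l=2}^{k} C(k,l) f^l(ι_v^{k-l} φ) + k (ι_v^{k-1} φ)(w) + t ι_v^k φ`. -/
def gAct (S : SymbolSystem W r) (v : W) (z : ModelSpace S) : ModelSpace S :=
  ⟨z.1, z.2.1 + z.1 • v, fun k =>
    (∑ i : Fin (k.val + 1),
        (((k.val + 2).choose (i.val + 2) : ℕ) : ℂ) •
          (z.2.2 ⟨i.val, by have := i.isLt; have := k.isLt; omega⟩).comp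
            (ctrRestrict S v (k.val + 2) (i.val + 2) (by have := i.isLt; omega)))
      + ((k.val + 2 : ℕ) : ℂ) •
          ((evalDiagL z.2.1).comp ((contrPowL v (k.val + 1)).comp
            ((symCastL (show k.val + 2 = 1 + (k.val + 1) by omega)).comp
              (S.F (k.val + 2)).subtype)))
      + z.1 •
          (eval0L.comp ((contrPowL v (k.val + 2)).comp
            ((symCastL (show k.val + 2 = 0 + (k.val + 2) by omega)).comp
              (S.F (k.val + 2)).subtype)))⟩

/-- The map `φ_F : ℂ × W → V`,
`φ_F(t, w) = (t^r, t^{r-1} w, (e_k(t,w))_k)` where `e_k(t,w)(φ) = t^{r-k} φ(w, …, w)`. -/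
def PhiF (S : SymbolSystem W r) (t : ℂ) (w : W) : ModelSpace S :=
  ⟨t ^ r, t ^ (r - 1) • w, fun k =>
    t ^ (r - (k.val + 2)) • ((evalDiagL w).comp (S.F (k.val + 2)).subtype)⟩

set_option linter.unusedSectionVars false
-- auxiliary lemmas
lemma symCast_apply {k l : ℕ} (h : k = l) (φ : SymForm W k) (x : Fin l → W) :
    symCast h φ x = φ (fun i => x (Fin.cast h i)) := by
  subst h; rfl

lemma contr_apply {k : ℕ} (w : W) (φ : SymForm W (k + 1)) (x : Fin k → W) :
    contr w φ x = φ (Fin.cons w x) := rfl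

lemma contrPow_apply_const (v w : W) :
    ∀ (j : ℕ) {m : ℕ} (φ : SymForm W (m + j)),
      contrPow v j φ (fun _ => w) = φ (fun i => if (i : ℕ) < j then v else w)
  | 0, m, φ => by
      refine congrArg (fun x => φ x) ?_
      funext i; simp
  | j + 1, m, φ => by
      rw [show contrPow v (j+1) φ = contrPow v j (contr v φ) from rfl,
        contrPow_apply_const v w j (contr v φ), contr_apply]
      congr 1
      funext i
      refine Fin.cases ?_ (fun q => ?_) i
      · simp
      · simp [Fin.cons_succ, Nat.succ_lt_succ_iff]

lemma IsSymForm.contr {k : ℕ} {φ : SymForm W (k + 1)} (h : IsSymForm φ) (w : W) :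
    IsSymForm (_root_.contr w φ) := by
  intro σ x
  have key := h (Equiv.Perm.decomposeFin.symm (0, σ)) (Fin.cons w x)
  rw [contr_apply, contr_apply, ← key]
  congr 1
  funext i
  refine Fin.cases ?_ (fun q => ?_) i
  · simp
  · simp [Equiv.Perm.decomposeFin_symm_apply_succ]
lemma cons_pre (v w : W) (j n : ℕ) (p : Fin (n + 1)) :
    (Fin.cons w (fun i : Fin n => if (i : ℕ) < j then v else w) : Fin (n+1) → W) p
      = if 1 ≤ (p : ℕ) ∧ (p : ℕ) < j + 1 then v else w := by
  refine Fin.cases ?_ (fun q => ?_) p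
  · simp
  · simp [Fin.cons_succ, Nat.succ_lt_succ_iff]

lemma contr_apply_pre {n : ℕ} {φ : SymForm W (n + 1)} (h : IsSymForm φ) (v w : W)
    (j : ℕ) (hj : j ≤ n) :
    contr w φ (fun i : Fin n => if (i : ℕ) < j then v else w)
      = φ (fun i : Fin (n + 1) => if (i : ℕ) < j then v else w) := by
  rw [contr_apply]
  set J : Fin (n + 1) := ⟨j, by omega⟩ with hJ
  have key := h (Fin.cycleRange J)
    (Fin.cons w (fun i : Fin n => if (i : ℕ) < j then v else w))
  rw [← key]
  congr 1
  funext i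
  simp only [Function.comp_apply]
  rcases lt_trichotomy (i : ℕ) j with hij | hij | hij
  · have h1 : i < J := by simp [hJ, Fin.lt_def, hij]
    rw [Fin.cycleRange_of_lt h1, cons_pre]
    have h2 : ((i + 1 : Fin (n + 1)) : ℕ) = (i : ℕ) + 1 := by
      rw [Fin.val_add_one_of_lt]
      exact Fin.lt_def.mpr (by simp; omega)
    rw [h2]
    rw [if_pos ⟨by omega, by omega⟩, if_pos hij]
  · have h1 : i = J := Fin.ext (by simp [hJ, hij])
    rw [h1, Fin.cycleRange_self, cons_pre]
    rw [if_neg (by simp), if_neg (by omega)]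
  · have h1 : J < i := by simp [hJ, Fin.lt_def, hij]
    rw [Fin.cycleRange_of_gt h1, cons_pre]
    rw [if_neg (by omega), if_neg (by omega)]

set_option linter.unusedSectionVars false in
lemma cons_v_pre (v w : W) (j n : ℕ) :
    Fin.cons v (fun i : Fin n => if (i : ℕ) < j then v else w)
      = fun i : Fin (n + 1) => if (i : ℕ) < j + 1 then v else w := by
  funext i
  refine Fin.cases ?_ (fun q => ?_) i
  · simp
  · simp [Fin.cons_succ, Nat.succ_lt_succ_iff]

lemma binom_sum_step (t : ℂ) (B : ℕ → ℂ) (n : ℕ) :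
    (∑ j ∈ Finset.range (n + 1), ((n.choose j : ℕ) : ℂ) * t ^ j * B j)
      + t * ∑ j ∈ Finset.range (n + 1), ((n.choose j : ℕ) : ℂ) * t ^ j * B (j + 1)
    = ∑ j ∈ Finset.range (n + 2), (((n + 1).choose j : ℕ) : ℂ) * t ^ j * B j := by
  rw [Finset.sum_range_succ' (fun j => (((n + 1).choose j : ℕ) : ℂ) * t ^ j * B j) (n + 1)]
  have e1 : ∀ j : ℕ, (((n + 1).choose (j + 1) : ℕ) : ℂ)
      = ((n.choose j : ℕ) : ℂ) + ((n.choose (j + 1) : ℕ) : ℂ) := by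
    intro j; rw [Nat.choose_succ_succ]; push_cast; ring
  have e2 : (∑ j ∈ Finset.range (n + 1),
        (((n + 1).choose (j + 1) : ℕ) : ℂ) * t ^ (j + 1) * B (j + 1))
      = (∑ j ∈ Finset.range (n + 1), ((n.choose j : ℕ) : ℂ) * t ^ (j + 1) * B (j + 1))
        + ∑ j ∈ Finset.range (n + 1), ((n.choose (j + 1) : ℕ) : ℂ) * t ^ (j + 1) * B (j + 1) := by
    rw [← Finset.sum_add_distrib]
    refine Finset.sum_congr rfl fun j _ => ?_
    rw [e1]; ring
  rw [e2]
  have e3 : (∑ j ∈ Finset.range (n + 1), ((n.choose (j + 1) : ℕ) : ℂ) * t ^ (j + 1) * B (j + 1))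
      = ∑ j ∈ Finset.range n, ((n.choose (j + 1) : ℕ) : ℂ) * t ^ (j + 1) * B (j + 1) := by
    rw [Finset.sum_range_succ, Nat.choose_succ_self]; simp
  have e4 : (∑ j ∈ Finset.range (n + 1), ((n.choose j : ℕ) : ℂ) * t ^ j * B j)
      = (∑ j ∈ Finset.range n, ((n.choose (j + 1) : ℕ) : ℂ) * t ^ (j + 1) * B (j + 1))
        + ((n.choose 0 : ℕ) : ℂ) * t ^ 0 * B 0 := by
    rw [Finset.sum_range_succ' (fun j => ((n.choose j : ℕ) : ℂ) * t ^ j * B j) n]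
  have e5 : (∑ j ∈ Finset.range (n + 1), ((n.choose j : ℕ) : ℂ) * t ^ (j + 1) * B (j + 1))
      = t * ∑ j ∈ Finset.range (n + 1), ((n.choose j : ℕ) : ℂ) * t ^ j * B (j + 1) := by
    rw [Finset.mul_sum]
    refine Finset.sum_congr rfl fun j _ => ?_
    ring
  rw [e5, e3, e4]
  simp
  ring
lemma sym_expand (t : ℂ) (v w : W) :
    ∀ (n : ℕ) (φ : SymForm W n), IsSymForm φ →
      φ (fun _ => w + t • v)
        = ∑ j ∈ Finset.range (n + 1),
            ((n.choose j : ℕ) : ℂ) * t ^ j * φ (fun i => if (i : ℕ) < j then v else w)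
  | 0, φ, _ => by
      rw [Finset.sum_range_one]
      simp only [Nat.choose_self, Nat.cast_one, pow_zero, one_mul]
      refine congrArg (fun x => φ x) ?_
      funext i; exact i.elim0
  | n + 1, φ, hφ => by
      have h1 : (fun _ : Fin (n + 1) => w + t • v)
          = Fin.cons (w + t • v) (fun _ : Fin n => w + t • v) := by
        funext i; refine Fin.cases rfl (fun q => rfl) i
      rw [h1, ← contr_apply]
      have hlin : contr (w + t • v) φ = contr w φ + t • contr v φ := by
        unfold contr
        rw [map_add, LinearMap.map_smul]
      rw [hlin]
      rw [show ((contr w φ + t • contr v φ) (fun _ : Fin n => w + t • v))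
          = contr w φ (fun _ => w + t • v) + t * contr v φ (fun _ => w + t • v) from rfl]
      rw [sym_expand t v w n (contr w φ) (hφ.contr w),
          sym_expand t v w n (contr v φ) (hφ.contr v)]
      have e1 : ∀ j ∈ Finset.range (n + 1),
          ((n.choose j : ℕ) : ℂ) * t ^ j * contr w φ (fun i => if (i : ℕ) < j then v else w)
            = ((n.choose j : ℕ) : ℂ) * t ^ j * φ (fun i => if (i : ℕ) < j then v else w) := by
        intro j hj
        rw [contr_apply_pre hφ v w j (Nat.lt_succ_iff.mp (Finset.mem_range.mp hj))]
      have e2 : ∀ j, contr v φ (fun i => if (i : ℕ) < j then v else w)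
          = φ (fun i => if (i : ℕ) < j + 1 then v else w) := by
        intro j
        rw [contr_apply, cons_v_pre]
      rw [Finset.sum_congr rfl e1]
      conv_lhs => rw [show (∑ j ∈ Finset.range (n + 1),
          ((n.choose j : ℕ) : ℂ) * t ^ j * contr v φ (fun i => if (i : ℕ) < j then v else w))
        = ∑ j ∈ Finset.range (n + 1),
          ((n.choose j : ℕ) : ℂ) * t ^ j * φ (fun i => if (i : ℕ) < j + 1 then v else w) from
          Finset.sum_congr rfl (fun j _ => by rw [e2])]
      exact binom_sum_step t (fun j => φ (fun i => if (i : ℕ) < j then v else w)) n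
lemma final_scalar (t : ℂ) (B : ℕ → ℂ) (K R : ℕ) (hK : K + 2 ≤ R) :
    (∑ i ∈ Finset.range (K + 1),
        (((K + 2).choose (i + 2) : ℕ) : ℂ) * (t ^ (R - (i + 2)) * B (K - i)))
      + ((K + 2 : ℕ) : ℂ) * (t ^ (R - 1) * B (K + 1)) + t ^ R * B (K + 2)
    = t ^ (R - (K + 2)) *
        ∑ j ∈ Finset.range (K + 3), (((K + 2).choose j : ℕ) : ℂ) * t ^ j * B j := by
  conv_rhs => rw [Finset.sum_range_succ, Finset.sum_range_succ, mul_add, mul_add]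
  have hA : t ^ (R - (K + 2)) * ((((K + 2).choose (K + 2) : ℕ) : ℂ) * t ^ (K + 2) * B (K + 2))
      = t ^ R * B (K + 2) := by
    rw [Nat.choose_self, Nat.cast_one, one_mul, ← mul_assoc, ← pow_add,
      show R - (K + 2) + (K + 2) = R by omega]
  have hB : t ^ (R - (K + 2)) * ((((K + 2).choose (K + 1) : ℕ) : ℂ) * t ^ (K + 1) * B (K + 1))
      = ((K + 2 : ℕ) : ℂ) * (t ^ (R - 1) * B (K + 1)) := by
    rw [show (K + 2).choose (K + 1) = K + 2 from Nat.choose_succ_self_right (K + 1)]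
    rw [show t ^ (R - 1) = t ^ (R - (K + 2)) * t ^ (K + 1) by
      rw [← pow_add]; congr 1; omega]
    ring
  have hC : (∑ i ∈ Finset.range (K + 1),
        (((K + 2).choose (i + 2) : ℕ) : ℂ) * (t ^ (R - (i + 2)) * B (K - i)))
      = t ^ (R - (K + 2)) *
          ∑ j ∈ Finset.range (K + 1), (((K + 2).choose j : ℕ) : ℂ) * t ^ j * B j := by
    rw [Finset.mul_sum]
    rw [← Finset.sum_range_reflect
      (fun j => t ^ (R - (K + 2)) * ((((K + 2).choose j : ℕ) : ℂ) * t ^ j * B j)) (K + 1)]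
    refine Finset.sum_congr rfl fun i hi => ?_
    have hi' : i ≤ K := Nat.lt_succ_iff.mp (Finset.mem_range.mp hi)
    rw [show K + 1 - 1 - i = K - i by omega]
    rw [show (K + 2).choose (K - i) = (K + 2).choose (i + 2) by
      rw [show K - i = (K + 2) - (i + 2) by omega]
      exact Nat.choose_symm (by omega)]
    rw [show t ^ (R - (i + 2)) = t ^ (R - (K + 2)) * t ^ (K - i) by
      rw [← pow_add]; congr 1; omega]
    ring
  rw [hA, hB, hC]
set_option maxHeartbeats 1000000 in
/-- equivariance step in Theorem 3.5(i): for all `t ∈ ℂ` and `w, v ∈ W`,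
`g_v (φ_F(t, w)) = φ_F(t, w + t v)`. -/
theorem gAct_PhiF_equivariant
    {W : Type*} [AddCommGroup W] [Module ℂ W] [FiniteDimensional ℂ W]
    {r : ℕ} (hr : 2 ≤ r) (S : SymbolSystem W r) :
    ∀ (t : ℂ) (w v : W), gAct S v (PhiF S t w) = PhiF S t (w + t • v) := by
  intro t w v
  unfold gAct PhiF
  refine Prod.ext rfl (Prod.ext ?_ ?_)
  · show t ^ (r - 1) • w + t ^ r • v = t ^ (r - 1) • (w + t • v)
    rw [smul_add, smul_smul, ← pow_succ, show r - 1 + 1 = r by omega]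
  · funext k
    have hK : k.val + 2 ≤ r := by have := k.isLt; omega
    apply LinearMap.ext
    intro φ
    have hsym : IsSymForm (φ : SymForm W (k.val + 2)) := S.isSymForm_mem _ _ φ.2
    have hcp : ∀ (L J : ℕ) (h : k.val + 2 = L + J),
        contrPow v J (symCast h (φ : SymForm W (k.val + 2))) (fun _ => w)
          = (φ : SymForm W (k.val + 2)) (fun q => if (q : ℕ) < J then v else w) := by
      intro L J h
      rw [contrPow_apply_const, symCast_apply]
      simp only [Fin.coe_cast]
    simp only [LinearMap.add_apply, LinearMap.sum_apply, LinearMap.smul_apply,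
      LinearMap.comp_apply, smul_eq_mul, Submodule.coe_subtype, ctrRestrict,
      LinearMap.codRestrict_apply, contrPowL, symCastL, evalDiagL, eval0L,
      LinearMap.coe_mk, AddHom.coe_mk]
    have hmid : ∀ (h : k.val + 2 = 1 + (k.val + 1)),
        (contrPow v (k.val + 1) (symCast h (φ : SymForm W (k.val + 2))))
            (fun _ : Fin 1 => t ^ (r - 1) • w)
          = t ^ (r - 1) *
              (φ : SymForm W (k.val + 2)) (fun q => if (q : ℕ) < k.val + 1 then v else w) := by
      intro h
      have e : (fun _ : Fin 1 => t ^ (r - 1) • w)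
          = fun i : Fin 1 => (fun _ : Fin 1 => t ^ (r - 1)) i • (fun _ : Fin 1 => w) i := rfl
      rw [e, MultilinearMap.map_smul_univ, hcp 1 (k.val + 1) h]
      simp
    have hzero : ∀ (h : k.val + 2 = 0 + (k.val + 2)),
        (contrPow v (k.val + 2) (symCast h (φ : SymForm W (k.val + 2)))) Fin.elim0
          = (φ : SymForm W (k.val + 2))
              (fun q => if (q : ℕ) < k.val + 2 then v else w) := by
      intro h
      rw [show (Fin.elim0 : Fin 0 → W) = (fun _ : Fin 0 => w) from funext fun q => q.elim0,
        hcp 0 (k.val + 2) h]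
    rw [hmid _, hzero _]
    have hsum : (∑ x : Fin (k.val + 1), (((k.val + 2).choose (x.val + 2) : ℕ) : ℂ)
          * (t ^ (r - (x.val + 2)) *
            contrPow v (k.val + 2 - (x.val + 2))
              (symCast (show k.val + 2 = x.val + 2 + (k.val + 2 - (x.val + 2)) by omega)
                (φ : SymForm W (k.val + 2))) (fun _ => w)))
        = ∑ i ∈ Finset.range (k.val + 1), (((k.val + 2).choose (i + 2) : ℕ) : ℂ)
            * (t ^ (r - (i + 2)) *
              (φ : SymForm W (k.val + 2)) (fun q => if (q : ℕ) < k.val - i then v else w)) := by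
      rw [← Fin.sum_univ_eq_sum_range (fun i => (((k.val + 2).choose (i + 2) : ℕ) : ℂ)
        * (t ^ (r - (i + 2)) *
          (φ : SymForm W (k.val + 2)) (fun q => if (q : ℕ) < k.val - i then v else w)))
        (k.val + 1)]
      refine Finset.sum_congr rfl fun x _ => ?_
      rw [hcp (x.val + 2) (k.val + 2 - (x.val + 2)) (by omega)]
      rw [show k.val + 2 - (x.val + 2) = k.val - x.val by omega]
    rw [hsum]
    rw [show ((φ : SymForm W (k.val + 2)) fun _ => w + t • v)
        = ∑ j ∈ Finset.range (k.val + 2 + 1), (((k.val + 2).choose j : ℕ) : ℂ) * t ^ j *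
            (φ : SymForm W (k.val + 2)) (fun q => if (q : ℕ) < j then v else w) from
      sym_expand t v w (k.val + 2) _ hsym]
    exact final_scalar t
      (fun j => (φ : SymForm W (k.val + 2)) (fun q => if (q : ℕ) < j then v else w))
      k.val r hK
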